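/- Let p be a prime, m ≥ 1, r = p^m, and v = cp for some 1 ≤ c ≤ p^{m-1}. For any monomial η = x^{a_0} y x^{a_1} y ⋯ y x^{a_v} with v occurrences of y and a_0 + ⋯ + a_v = r - v, the number of indices k ∈ {0, 1, …, r-1} such that the monomial (x+ty)^k y (x+ty)^{r-1-k} contributes η with a nonzero t-coefficient is exactly v, and the total coefficient of η in Σ_{k=0}^{r-1} (x+ty)^k y (x+ty)^{r-1-k} is v·t^{v-1}, which vanishes mod p since p | v. -/

import Mathlib

open scoped Classical

open Polynomial

/-- The word `x^{a_0} y x^{a_1} y ⋯ y x^{a_v}` in the free monoid on two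
letters (letter `0` is `x`, letter `1` is `y`), given `a : Fin (v+1) → ℕ`. -/
def etaWord' (v : ℕ) (a : Fin (v + 1) → ℕ) : FreeMonoid (Fin 2) :=
  (FreeMonoid.of (0 : Fin 2)) ^ (a 0) *
    (List.ofFn fun i : Fin v =>
      FreeMonoid.of (1 : Fin 2) * (FreeMonoid.of (0 : Fin 2)) ^ (a i.succ)).prod

/-- The summand `(x + t y)^k · y · (x + t y)^{r-1-k}` in the polynomial ring
over the free associative algebra over `F_p` on `x, y`. -/
noncomputable def summand (p r k : ℕ) : Polynomial (FreeAlgebra (ZMod p) (Fin 2)) :=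
  (C (FreeAlgebra.ι (ZMod p) (0 : Fin 2)) + X * C (FreeAlgebra.ι (ZMod p) (1 : Fin 2))) ^ k *
    C (FreeAlgebra.ι (ZMod p) (1 : Fin 2)) *
    (C (FreeAlgebra.ι (ZMod p) (0 : Fin 2)) + X * C (FreeAlgebra.ι (ZMod p) (1 : Fin 2))) ^
      (r - 1 - k)

/-- The coefficient of the word `w` in an element of the free algebra. -/
noncomputable def wordCoeff (p : ℕ) (z : FreeAlgebra (ZMod p) (Fin 2))
    (w : FreeMonoid (Fin 2)) : ZMod p :=
  ((FreeAlgebra.equivMonoidAlgebraFreeMonoid (R := ZMod p) (X := Fin 2)) z).coeff w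

noncomputable section AuxStuff

variable (p : ℕ)

/-- The monoid hom embedding words into the free algebra. -/
def ofWord : FreeMonoid (Fin 2) →* FreeAlgebra (ZMod p) (Fin 2) :=
  FreeMonoid.lift (FreeAlgebra.ι (ZMod p))

lemma equiv_ofWord (w : FreeMonoid (Fin 2)) :
    (FreeAlgebra.equivMonoidAlgebraFreeMonoid (R := ZMod p) (X := Fin 2)) (ofWord p w)
      = MonoidAlgebra.of (ZMod p) (FreeMonoid (Fin 2)) w := by
  refine FreeMonoid.recOn w ?_ ?_
  · simp [MonoidAlgebra.one_def]
  · intro x xs ih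
    rw [map_mul, map_mul, map_mul, ih]
    congr 1
    simp [ofWord, FreeAlgebra.equivMonoidAlgebraFreeMonoid]

lemma wordCoeff_ofWord (w w' : FreeMonoid (Fin 2)) :
    wordCoeff p (ofWord p w) w' = if w = w' then 1 else 0 := by
  rw [wordCoeff, equiv_ofWord]
  simp [MonoidAlgebra.of_apply, MonoidAlgebra.coeff_single, Finsupp.single_apply]

lemma wordCoeff_zero (w' : FreeMonoid (Fin 2)) : wordCoeff p 0 w' = 0 := by
  simp [wordCoeff]

lemma wordCoeff_sum {ι : Type*} (s : Finset ι) (f : ι → FreeAlgebra (ZMod p) (Fin 2))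
    (w' : FreeMonoid (Fin 2)) :
    wordCoeff p (∑ i ∈ s, f i) w' = ∑ i ∈ s, wordCoeff p (f i) w' := by
  simp only [wordCoeff, map_sum, MonoidAlgebra.coeff_sum]
  exact Finset.sum_apply' w'

/-- The term of `(x+ty)^n` corresponding to a word `L`. -/
def Sterm (L : List (Fin 2)) : Polynomial (FreeAlgebra (ZMod p) (Fin 2)) :=
  X ^ (L.count 1) * C (ofWord p (FreeMonoid.ofList L))

lemma gterm_mul (c1 c2 : ℕ) (w1 w2 : FreeMonoid (Fin 2)) :
    (X ^ c1 * C (ofWord p w1)) * (X ^ c2 * C (ofWord p w2)) =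
      X ^ (c1 + c2) * C (ofWord p (w1 * w2)) := by
  rw [pow_add, map_mul, C_mul]
  rw [mul_assoc, mul_assoc]
  conv_lhs => rw [Polynomial.X_pow_mul (p := C ((ofWord p) w2)) (n := c2)]
  rw [Polynomial.X_pow_mul (p := C ((ofWord p) w1) * C ((ofWord p) w2)), mul_assoc]

lemma Sterm_mul (L1 L2 : List (Fin 2)) :
    Sterm p L1 * Sterm p L2 = Sterm p (L1 ++ L2) := by
  have h1 : FreeMonoid.ofList (L1 ++ L2) = FreeMonoid.ofList L1 * FreeMonoid.ofList L2 := rfl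
  rw [Sterm, Sterm, Sterm, List.count_append, h1, gterm_mul]

lemma ubase_eq :
    (C (FreeAlgebra.ι (ZMod p) (0 : Fin 2)) + X * C (FreeAlgebra.ι (ZMod p) (1 : Fin 2)))
      = ∑ b : Fin 2, Sterm p [b] := by
  rw [Fin.sum_univ_two]
  have h0 : ([(0 : Fin 2)].count 1) = 0 := by decide
  have h1 : ([(1 : Fin 2)].count 1) = 1 := by decide
  rw [Sterm, Sterm, h0, h1]
  have e0 : ofWord p (FreeMonoid.ofList [(0 : Fin 2)]) = FreeAlgebra.ι (ZMod p) 0 := by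
    simp [ofWord, show FreeMonoid.ofList [(0 : Fin 2)] = FreeMonoid.of 0 from rfl]
  have e1 : ofWord p (FreeMonoid.ofList [(1 : Fin 2)]) = FreeAlgebra.ι (ZMod p) 1 := by
    simp [ofWord, show FreeMonoid.ofList [(1 : Fin 2)] = FreeMonoid.of 1 from rfl]
  rw [e0, e1, pow_zero, pow_one, one_mul]

lemma ubase_pow (n : ℕ) :
    (C (FreeAlgebra.ι (ZMod p) (0 : Fin 2)) + X * C (FreeAlgebra.ι (ZMod p) (1 : Fin 2))) ^ n
      = ∑ f : Fin n → Fin 2, Sterm p (List.ofFn f) := by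
  induction n with
  | zero =>
      rw [pow_zero]
      rw [Fintype.sum_unique]
      simp [Sterm]
  | succ n ih =>
      rw [pow_succ', ih, ubase_eq, Finset.sum_mul_sum]
      rw [← Fintype.sum_prod_type']
      refine Fintype.sum_equiv (Fin.consEquiv (fun _ : Fin (n+1) => Fin 2)) _ _ ?_
      intro x
      obtain ⟨b, f⟩ := x
      rw [Sterm_mul]
      congr 1
      simp [Fin.consEquiv, List.ofFn_succ]

lemma Tterm_eq (L1 L2 : List (Fin 2)) :
    Sterm p L1 * C (FreeAlgebra.ι (ZMod p) (1 : Fin 2)) * Sterm p L2 =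
      X ^ (L1.count 1 + L2.count 1) *
        C (ofWord p (FreeMonoid.ofList (L1 ++ 1 :: L2))) := by
  have h1 : FreeMonoid.ofList (L1 ++ 1 :: L2)
      = FreeMonoid.ofList L1 * (FreeMonoid.of 1 * FreeMonoid.ofList L2) := rfl
  have hy : C (FreeAlgebra.ι (ZMod p) (1 : Fin 2))
      = X ^ 0 * C (ofWord p (FreeMonoid.of 1)) := by
    simp [ofWord]
  rw [Sterm, Sterm, hy, h1, gterm_mul, gterm_mul]
  norm_num [mul_assoc]

lemma summand_eq (r k : ℕ) :
    summand p r k = ∑ f : Fin k → Fin 2, ∑ g : Fin (r - 1 - k) → Fin 2,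
      X ^ ((List.ofFn f).count 1 + (List.ofFn g).count 1) *
        C (ofWord p (FreeMonoid.ofList (List.ofFn f ++ 1 :: List.ofFn g))) := by
  rw [summand, ubase_pow, ubase_pow, Finset.sum_mul, Finset.sum_mul]
  refine Finset.sum_congr rfl fun f _ => ?_
  rw [Finset.mul_sum]
  refine Finset.sum_congr rfl fun g _ => ?_
  rw [Tterm_eq]

lemma wordCoeff_coeff_term (i : ℕ) (c : ℕ) (w w' : FreeMonoid (Fin 2)) :
    wordCoeff p ((X ^ c * C (ofWord p w)).coeff i) w' =
      if i = c ∧ w = w' then 1 else 0 := by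
  rw [Polynomial.X_pow_mul, Polynomial.coeff_C_mul_X_pow]
  by_cases h : i = c
  · simp [h, wordCoeff_ofWord]
  · simp [h, wordCoeff_zero]

lemma card_filter_range_count {α : Type*} [DecidableEq α] (L : List α) (x : α) :
    ((Finset.range L.length).filter fun k => L[k]? = some x).card = L.count x := by
  induction L with
  | nil => simp
  | cons b L ih =>
      rw [Finset.card_filter] at *
      rw [List.length_cons, Finset.sum_range_succ']
      simp only [List.getElem?_cons_succ, List.getElem?_cons_zero]
      rw [ih, List.count_cons]
      by_cases hb : b = x
      · simp [hb]
      · simp [hb, Ne.symm hb]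

lemma key (r k i : ℕ) (hk : k < r) (L : List (Fin 2)) (hL : L.length = r) :
    wordCoeff p ((summand p r k).coeff i) (FreeMonoid.ofList L) =
      if L[k]? = some 1 ∧ i = L.count 1 - 1 then 1 else 0 := by
  have hterm : ∀ (f : Fin k → Fin 2) (g : Fin (r - 1 - k) → Fin 2),
      wordCoeff p ((X ^ ((List.ofFn f).count 1 + (List.ofFn g).count 1) *
        C (ofWord p (FreeMonoid.ofList (List.ofFn f ++ 1 :: List.ofFn g)))).coeff i)
        (FreeMonoid.ofList L)
      = if (i = (List.ofFn f).count 1 + (List.ofFn g).count 1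
          ∧ List.ofFn f ++ 1 :: List.ofFn g = L) then 1 else 0 := by
    intro f g
    rw [wordCoeff_coeff_term]
    refine if_congr ?_ rfl rfl
    constructor
    · rintro ⟨h1, h2⟩
      exact ⟨h1, FreeMonoid.ofList.injective h2⟩
    · rintro ⟨h1, h2⟩
      exact ⟨h1, by rw [h2]⟩
  rw [summand_eq]
  rw [Polynomial.finset_sum_coeff, wordCoeff_sum]
  have : ∀ f : Fin k → Fin 2,
      wordCoeff p ((∑ g : Fin (r - 1 - k) → Fin 2,
        X ^ ((List.ofFn f).count 1 + (List.ofFn g).count 1) *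
          C (ofWord p (FreeMonoid.ofList (List.ofFn f ++ 1 :: List.ofFn g)))).coeff i)
        (FreeMonoid.ofList L)
      = ∑ g : Fin (r - 1 - k) → Fin 2,
          if (i = (List.ofFn f).count 1 + (List.ofFn g).count 1
            ∧ List.ofFn f ++ 1 :: List.ofFn g = L) then (1 : ZMod p) else 0 := by
    intro f
    rw [Polynomial.finset_sum_coeff, wordCoeff_sum]
    exact Finset.sum_congr rfl fun g _ => hterm f g
  rw [Finset.sum_congr rfl fun f _ => this f]
  rw [← Fintype.sum_prod_type']
  by_cases hget : L[k]? = some 1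
  · have hkL : k < L.length := hL ▸ hk
    have hgetelem : L[k] = 1 := by
      rw [List.getElem?_eq_some_iff] at hget
      exact hget.2
    set f₀ : Fin k → Fin 2 := fun j => L[(j : ℕ)]'(by omega) with hf₀
    set g₀ : Fin (r - 1 - k) → Fin 2 :=
      fun j => L[k + 1 + (j : ℕ)]'(by have := j.isLt; omega) with hg₀
    have h1 : List.ofFn f₀ = L.take k := by
      apply List.ext_getElem
      · simp [hkL.le]
      · intro n hn hn'
        simp [hf₀, List.getElem_take]
    have h2 : List.ofFn g₀ = L.drop (k + 1) := by
      apply List.ext_getElem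
      · simp; omega
      · intro n hn hn'
        simp only [List.getElem_ofFn, List.getElem_drop]
        rfl
    have hdecomp : List.ofFn f₀ ++ 1 :: List.ofFn g₀ = L := by
      rw [h1, h2, ← hgetelem, List.getElem_cons_drop, List.take_append_drop]
    have hcount : L.count 1 =
        (List.ofFn f₀).count 1 + (List.ofFn g₀).count 1 + 1 := by
      rw [← hdecomp, List.count_append, List.count_cons]
      simp
      omega
    rw [Fintype.sum_eq_single (f₀, g₀)]
    · have hcond : (i = List.count 1 (List.ofFn f₀) + List.count 1 (List.ofFn g₀) ∧
          List.ofFn f₀ ++ 1 :: List.ofFn g₀ = L) ↔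
          (L[k]? = some 1 ∧ i = L.count 1 - 1) := by
        constructor
        · rintro ⟨hi, -⟩
          exact ⟨hget, by omega⟩
        · rintro ⟨-, hi⟩
          exact ⟨by omega, hdecomp⟩
      exact if_congr hcond rfl rfl
    · rintro ⟨f, g⟩ hne
      rw [if_neg]
      rintro ⟨h1', h2'⟩
      apply hne
      rw [← hdecomp] at h2'
      obtain ⟨hf, hg⟩ := List.append_inj h2' (by simp)
      have hg' : List.ofFn g = List.ofFn g₀ := by
        injection hg
      exact Prod.ext (List.ofFn_injective hf) (List.ofFn_injective hg')
  · rw [if_neg (by tauto)]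
    apply Finset.sum_eq_zero
    rintro ⟨f, g⟩ _
    rw [if_neg]
    rintro ⟨h1', h2'⟩
    apply hget
    rw [← h2', List.getElem?_append_right (by simp)]
    simp

lemma toList_of_pow (x : Fin 2) (n : ℕ) :
    FreeMonoid.toList (FreeMonoid.of x ^ n) = List.replicate n x := by
  induction n with
  | zero => rfl
  | succ n ih =>
      rw [pow_succ', FreeMonoid.toList_mul, ih, FreeMonoid.toList_of, List.replicate_succ]
      rfl

lemma etaWord'_toList (v : ℕ) (a : Fin (v + 1) → ℕ) :
    FreeMonoid.toList (etaWord' v a) =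
      List.replicate (a 0) 0 ++
        (List.ofFn fun i : Fin v => (1 : Fin 2) :: List.replicate (a i.succ) 0).flatten := by
  rw [etaWord', FreeMonoid.toList_mul, toList_of_pow, FreeMonoid.toList_prod]
  congr 1
  rw [List.map_ofFn]
  refine congrArg _ (congrArg List.ofFn (funext fun i => ?_))
  simp only [Function.comp_apply, FreeMonoid.toList_mul, FreeMonoid.toList_of, toList_of_pow]
  rfl

lemma etaWord'_length (v : ℕ) (a : Fin (v + 1) → ℕ) :
    (FreeMonoid.toList (etaWord' v a)).length = (∑ i, a i) + v := by
  rw [etaWord'_toList]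
  rw [List.length_append, List.length_replicate, List.length_flatten, List.map_ofFn]
  have : (List.ofFn ((fun L : List (Fin 2) => L.length) ∘
      fun i : Fin v => (1 : Fin 2) :: List.replicate (a i.succ) 0)).sum
      = ∑ i : Fin v, (1 + a i.succ) := by
    rw [List.sum_ofFn]
    refine Finset.sum_congr rfl fun i _ => ?_
    simp
    omega
  rw [this, Fin.sum_univ_succ, Finset.sum_add_distrib]
  simp [Finset.card_univ, mul_comm]
  omega

lemma etaWord'_count (v : ℕ) (a : Fin (v + 1) → ℕ) :
    (FreeMonoid.toList (etaWord' v a)).count 1 = v := by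
  rw [etaWord'_toList]
  rw [List.count_append, List.count_flatten, List.map_ofFn]
  have h0 : (List.replicate (a 0) (0 : Fin 2)).count 1 = 0 := by
    simp [List.count_replicate]
  have : (List.ofFn ((fun L : List (Fin 2) => L.count 1) ∘
      fun i : Fin v => (1 : Fin 2) :: List.replicate (a i.succ) 0)).sum
      = ∑ i : Fin v, 1 := by
    rw [List.sum_ofFn]
    refine Finset.sum_congr rfl fun i _ => ?_
    simp [List.count_cons, List.count_replicate]
  rw [h0, this]
  simp

end AuxStuff

/-- Let `p` be prime, `r = p^m` and `v = c p` with `1 ≤ c ≤ p^{m-1}`.  For any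
monomial `η = x^{a_0} y x^{a_1} ⋯ y x^{a_v}` with `v` occurrences of `y` and
`Σ aᵢ = r - v`, exactly `v` of the indices `k ∈ {0, …, r-1}` are such that
`(x+ty)^k y (x+ty)^{r-1-k}` contributes `η` with a nonzero `t`-coefficient,
and the total coefficient of `η` in `Σ_{k=0}^{r-1} (x+ty)^k y (x+ty)^{r-1-k}`
is `v · t^{v-1}`, which vanishes mod `p` since `p ∣ v`. -/
theorem stmt_15 (p : ℕ) [Fact p.Prime] (m : ℕ) (hm : 1 ≤ m) (c : ℕ)
    (hc1 : 1 ≤ c) (hc2 : c ≤ p ^ (m - 1)) (a : Fin (c * p + 1) → ℕ)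
    (ha : ∑ i, a i = p ^ m - c * p) :
    ((Finset.range (p ^ m)).filter fun k =>
        ∃ i : ℕ, wordCoeff p ((summand p (p ^ m) k).coeff i) (etaWord' (c * p) a) ≠ 0).card
        = c * p ∧
    (∀ i : ℕ,
      wordCoeff p ((∑ k ∈ Finset.range (p ^ m), summand p (p ^ m) k).coeff i)
          (etaWord' (c * p) a) =
        if i = c * p - 1 then ((c * p : ℕ) : ZMod p) else 0) ∧
    ((c * p : ℕ) : ZMod p) = 0 := by
  haveI : Fact (1 < p) := ⟨(Fact.out : p.Prime).one_lt⟩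
  have hvr : c * p ≤ p ^ m := by
    calc c * p ≤ p ^ (m - 1) * p := Nat.mul_le_mul_right p hc2
    _ = p ^ m := by rw [← pow_succ]; congr 1; omega
  set L := FreeMonoid.toList (etaWord' (c * p) a) with hLdef
  have hlen : L.length = p ^ m := by
    rw [hLdef, etaWord'_length, ha]
    omega
  have hcnt : L.count 1 = c * p := etaWord'_count (c * p) a
  have hη : FreeMonoid.ofList L = etaWord' (c * p) a := FreeMonoid.ofList_toList _
  have key' : ∀ k < p ^ m, ∀ i : ℕ,
      wordCoeff p ((summand p (p ^ m) k).coeff i) (etaWord' (c * p) a) =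
        if L[k]? = some 1 ∧ i = c * p - 1 then 1 else 0 := by
    intro k hk i
    rw [← hη, key p (p ^ m) k i hk L hlen, hcnt]
  have hcard : ((Finset.range (p ^ m)).filter fun k => L[k]? = some 1).card = c * p := by
    rw [← hlen, card_filter_range_count, hcnt]
  constructor
  · rw [show ((Finset.range (p ^ m)).filter fun k =>
        ∃ i : ℕ, wordCoeff p ((summand p (p ^ m) k).coeff i) (etaWord' (c * p) a) ≠ 0)
        = (Finset.range (p ^ m)).filter fun k => L[k]? = some 1 from ?_]
    · exact hcard
    · refine Finset.filter_congr fun k hk => ?_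
      have hk' : k < p ^ m := Finset.mem_range.mp hk
      constructor
      · rintro ⟨i, hi⟩
        by_contra hg
        apply hi
        rw [key' k hk' i, if_neg (by tauto)]
      · intro hg
        refine ⟨c * p - 1, ?_⟩
        rw [key' k hk' (c * p - 1), if_pos ⟨hg, rfl⟩]
        exact one_ne_zero
  refine ⟨fun i => ?_, ?_⟩
  · rw [Polynomial.finset_sum_coeff, wordCoeff_sum]
    rw [Finset.sum_congr rfl fun k hk => key' k (Finset.mem_range.mp hk) i]
    by_cases hi : i = c * p - 1
    · rw [if_pos hi]
      simp only [hi, and_true]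
      rw [Finset.sum_boole]
      rw [hcard]
    · rw [if_neg hi]
      apply Finset.sum_eq_zero
      intro k _
      rw [if_neg (by tauto)]
  · rw [Nat.cast_mul, ZMod.natCast_self, mul_zero]
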